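/- A language over a finite alphabet is a finite positive Boolean combination of piece languages if and only if it is upward closed under the subword ordering. -/

import Mathlib

/-- Finite positive Boolean combinations (unions and intersections, including the empty
union `∅`) of piece languages; the piece language of the word `w = a₁⋯aₙ` is
`Σ* a₁ Σ* ⋯ Σ* aₙ Σ* = {v | w ⪯ v}`. -/
inductive PosPTL {A : Type*} : Set (List A) → Prop
  | piece (w : List A) : PosPTL {v | w.Sublist v}
  | empty : PosPTL ∅
  | union {L L' : Set (List A)} : PosPTL L → PosPTL L' → PosPTL (L ∪ L')
  | inter {L L' : Set (List A)} : PosPTL L → PosPTL L' → PosPTL (L ∩ L')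

open Classical in
lemma exists_finite_basis {α : Type*} {s : Set α} {r : α → α → Prop}
    (h : s.PartiallyWellOrderedOn r) :
    ∃ B : Finset α, ↑B ⊆ s ∧ ∀ x ∈ s, ∃ b ∈ B, r b x := by
  rcases Set.eq_empty_or_nonempty s with rfl | ⟨x0, hx0⟩
  · exact ⟨∅, by simp, fun x hx => hx.elim⟩
  by_contra hc
  push_neg at hc
  have key : ∀ B : Finset α, ∃ x, x ∈ s ∧ ((∀ b ∈ B, b ∈ s) → ∀ b ∈ B, ¬ r b x) := by
    intro B
    by_cases hB : ∀ b ∈ B, b ∈ s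
    · obtain ⟨x, hx, hx2⟩ := hc B (fun b hb => hB b hb)
      exact ⟨x, hx, fun _ => hx2⟩
    · exact ⟨x0, hx0, fun h' => absurd h' hB⟩
  choose g hg1 hg2 using key
  -- build increasing finsets
  let F : ℕ → Finset α := fun n => Nat.rec ∅ (fun _ Fn => insert (g Fn) Fn) n
  have hFs : ∀ n, ∀ x ∈ F n, x ∈ s := by
    intro n
    induction n with
    | zero => simp [F]
    | succ n ih =>
      intro x hx
      simp only [F, Finset.mem_insert] at hx
      rcases hx with rfl | hx
      · exact hg1 (F n)
      · exact ih x hx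
  let f : ℕ → α := fun n => g (F n)
  have hfF : ∀ i j, i < j → f i ∈ F j := by
    intro i j hij
    induction j with
    | zero => omega
    | succ j ih =>
      simp only [F, Finset.mem_insert]
      rcases Nat.lt_succ_iff_lt_or_eq.1 hij with h' | rfl
      · exact Or.inr (ih h')
      · exact Or.inl rfl
  obtain ⟨i, j, hij, hr⟩ := h (fun n => ⟨f n, hg1 (F n)⟩)
  exact hg2 (F j) (hFs j) (f i) (hfF i j hij) hr

/-- A language over a finite alphabet is a finite positive Boolean combination of piece
languages iff it is upward closed under the subword ordering. -/
theorem posPTL_iff_upwardClosed {A : Type*} [Finite A] (L : Set (List A)) :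
    PosPTL L ↔ ∀ u ∈ L, ∀ v : List A, u.Sublist v → v ∈ L := by
  constructor
  · intro h
    induction h with
    | piece w => exact fun u hu v huv => hu.trans huv
    | empty => exact fun u hu => hu.elim
    | union h1 h2 ih1 ih2 =>
      rintro u (hu | hu) v huv
      · exact Or.inl (ih1 u hu v huv)
      · exact Or.inr (ih2 u hu v huv)
    | inter h1 h2 ih1 ih2 =>
      rintro u ⟨hu1, hu2⟩ v huv
      exact ⟨ih1 u hu1 v huv, ih2 u hu2 v huv⟩
  · intro hup
    -- Higman's lemma: L is partially well-ordered by Sublist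
    have hA : (Set.univ : Set A).PartiallyWellOrderedOn (· = ·) :=
      Set.Finite.partiallyWellOrderedOn (Set.finite_univ)
    have hH := hA.partiallyWellOrderedOn_sublistForall₂ (r := (· = ·))
    have hL : L.PartiallyWellOrderedOn (fun l₁ l₂ => List.SublistForall₂ (· = ·) l₁ l₂) :=
      hH.mono (fun l _ => by simp)
    have hL' : L.PartiallyWellOrderedOn (fun l₁ l₂ => l₁.Sublist l₂) := by
      intro f
      obtain ⟨i, j, hij, hr⟩ := hL f
      refine ⟨i, j, hij, ?_⟩
      obtain ⟨l, hl1, hl2⟩ := List.sublistForall₂_iff.1 hr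
      have : (f i).1 = l := by simpa using hl1
      show (f i).1.Sublist (f j).1
      rwa [this]
    obtain ⟨B, hBs, hB⟩ := exists_finite_basis hL'
    have hLeq : L = ⋃ b ∈ B, {v | b.Sublist v} := by
      ext x
      simp only [Set.mem_iUnion, Set.mem_setOf_eq]
      constructor
      · intro hx
        obtain ⟨b, hb, hbx⟩ := hB x hx
        exact ⟨b, hb, hbx⟩
      · rintro ⟨b, hb, hbx⟩
        exact hup b (hBs hb) x hbx
    rw [hLeq]
    clear hLeq hB hBs
    classical
    induction B using Finset.induction with
    | empty => simpa using PosPTL.empty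
    | insert _ _ hx ih =>
      rw [Finset.set_biUnion_insert]
      exact PosPTL.union (PosPTL.piece _) ih
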